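/- Let G and Ĝ be two finite games on the same player set N and strategy spaces A, and define α = ‖G − Ĝ‖ where the norm on the space of games is ‖G‖² = Σ_{i∈N} h_i Σ_{a∈A} J_i(a)², with h_i = |A_i|. Then every pure-strategy Nash equilibrium of Ĝ is an ε-Nash equilibrium of G for some ε ≤ max_{i∈N} 2α/√h_i. -/
import Mathlib


/-- every PSNE of Ĝ is an ε-NE of G for some
ε ≤ max_i 2α/√h_i, where α = ‖G − Ĝ‖ in the weighted game norm. -/
theorem PSNE_is_epsilon_NE_of_nearby_game
    {N : Type} [Fintype N] [Nonempty N] [DecidableEq N]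
    (A : N → Type) [∀ i, Fintype (A i)] [∀ i, Nonempty (A i)]
    (J Jhat : N → (∀ i, A i) → ℝ)
    (α : ℝ)
    (hα : α = Real.sqrt (∑ i : N,
      (Fintype.card (A i) : ℝ) * ∑ a : ∀ i, A i, (J i a - Jhat i a) ^ 2))
    (astar : ∀ i, A i)
    (hNE : ∀ (i : N) (b : A i), Jhat i astar ≤ Jhat i (Function.update astar i b)) :
    ∃ ε : ℝ,
      ε ≤ Finset.univ.sup' Finset.univ_nonempty
        (fun i : N => 2 * α / Real.sqrt (Fintype.card (A i) : ℝ)) ∧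
      ∀ (i : N) (b : A i),
        J i astar ≤ J i (Function.update astar i b) + ε := by
  set S : ℝ := ∑ i : N,
      (Fintype.card (A i) : ℝ) * ∑ a : ∀ i, A i, (J i a - Jhat i a) ^ 2 with hS
  have hSnn : 0 ≤ S := by
    apply Finset.sum_nonneg
    intro i _
    exact mul_nonneg (Nat.cast_nonneg _) (Finset.sum_nonneg fun a _ => sq_nonneg _)
  have hα0 : 0 ≤ α := hα ▸ Real.sqrt_nonneg _
  have hαsq : α ^ 2 = S := by rw [hα, Real.sq_sqrt hSnn]
  -- key pointwise bound
  have key : ∀ (i : N) (a : ∀ j, A j),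
      |J i a - Jhat i a| ≤ α / Real.sqrt (Fintype.card (A i) : ℝ) := by
    intro i a
    have hcpos : (0 : ℝ) < (Fintype.card (A i) : ℝ) := by
      exact_mod_cast Fintype.card_pos
    have h1 : (Fintype.card (A i) : ℝ) * (J i a - Jhat i a) ^ 2 ≤ S := by
      calc (Fintype.card (A i) : ℝ) * (J i a - Jhat i a) ^ 2
          ≤ (Fintype.card (A i) : ℝ) * ∑ b : ∀ j, A j, (J i b - Jhat i b) ^ 2 := by
            apply mul_le_mul_of_nonneg_left _ hcpos.le
            exact Finset.single_le_sum (f := fun b => (J i b - Jhat i b) ^ 2)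
              (fun b _ => sq_nonneg _) (Finset.mem_univ a)
        _ ≤ S := by
            rw [hS]
            exact Finset.single_le_sum
              (f := fun j => (Fintype.card (A j) : ℝ) *
                ∑ b : ∀ k, A k, (J j b - Jhat j b) ^ 2)
              (fun j _ => mul_nonneg (Nat.cast_nonneg _)
                (Finset.sum_nonneg fun b _ => sq_nonneg _)) (Finset.mem_univ i)
    have h2 : (J i a - Jhat i a) ^ 2 ≤ α ^ 2 / (Fintype.card (A i) : ℝ) := by
      rw [hαsq, le_div_iff₀ hcpos]; linarith [h1]
    have h3 : |J i a - Jhat i a| ≤ Real.sqrt (α ^ 2 / (Fintype.card (A i) : ℝ)) := by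
      rw [← Real.sqrt_sq_eq_abs]
      exact Real.sqrt_le_sqrt h2
    calc |J i a - Jhat i a| ≤ Real.sqrt (α ^ 2 / (Fintype.card (A i) : ℝ)) := h3
      _ = α / Real.sqrt (Fintype.card (A i) : ℝ) := by
          rw [Real.sqrt_div (sq_nonneg α), Real.sqrt_sq hα0]
  refine ⟨_, le_refl _, ?_⟩
  intro i b
  have hle : 2 * α / Real.sqrt (Fintype.card (A i) : ℝ) ≤
      Finset.univ.sup' Finset.univ_nonempty
        (fun i : N => 2 * α / Real.sqrt (Fintype.card (A i) : ℝ)) :=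
    Finset.le_sup' (fun i : N => 2 * α / Real.sqrt (Fintype.card (A i) : ℝ)) (Finset.mem_univ i)
  have k1 := key i astar
  have k2 := key i (Function.update astar i b)
  have hne := hNE i b
  have h1 := abs_le.mp k1
  have h2 := abs_le.mp k2
  have : J i astar ≤ J i (Function.update astar i b)
      + 2 * α / Real.sqrt (Fintype.card (A i) : ℝ) := by
    have hsnn : 0 ≤ Real.sqrt (Fintype.card (A i) : ℝ) := Real.sqrt_nonneg _
    have e : 2 * α / Real.sqrt (Fintype.card (A i) : ℝ)
        = α / Real.sqrt (Fintype.card (A i) : ℝ)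
          + α / Real.sqrt (Fintype.card (A i) : ℝ) := by ring
    rw [e]
    linarith [h1.2, h2.1]
  linarith [this, hle]
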